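/- For n ≥ 2 and fixed integers a_1, ..., a_{n-1}, the discriminant Δ(a_1, ..., a_{n-1}, a_n) of X^n + a_1 X^{n-1} + ... + a_n, viewed as a polynomial in the single variable a_n, has degree n-1 and leading coefficient (-1)^{n(n-1)/2} n^n. -/

import Mathlib

open Polynomial

/-- The discriminant of a monic polynomial over `ℂ`, defined as
`∏_{i<j} (α_i - α_j)^2 = (-1)^{n(n-1)/2} ∏_i f'(α_i)`. -/
noncomputable def disc (f : Polynomial ℂ) : ℂ :=
  (-1 : ℂ) ^ (f.natDegree * (f.natDegree - 1) / 2) *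
    (f.roots.map (fun r => Polynomial.eval r (Polynomial.derivative f))).prod

namespace DiscProof

variable {n : ℕ} {a : ℕ → ℤ}

noncomputable def base (n : ℕ) (a : ℕ → ℤ) : Polynomial ℂ :=
  X ^ n + ∑ i ∈ Finset.Icc 1 (n - 1), C ((a i : ℂ)) * X ^ (n - i)

lemma degree_lowpart (hn : 2 ≤ n) (z : ℂ) :
    ((∑ i ∈ Finset.Icc 1 (n - 1), C ((a i : ℂ)) * X ^ (n - i)) + C z).degree < (n : ℕ) := by
  have h0 : (0:ℕ) < n := by omega
  apply lt_of_le_of_lt (Polynomial.degree_add_le _ _)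
  rw [max_lt_iff]
  constructor
  · apply lt_of_le_of_lt (Polynomial.degree_sum_le _ _)
    rw [Finset.sup_lt_iff (by exact_mod_cast WithBot.bot_lt_coe (n:ℕ))]
    intro i hi
    apply lt_of_le_of_lt (Polynomial.degree_C_mul_X_pow_le _ _)
    rw [Finset.mem_Icc] at hi
    exact_mod_cast Nat.sub_lt h0 (by omega)
  · exact lt_of_le_of_lt Polynomial.degree_C_le (by exact_mod_cast h0)

lemma monic_f (hn : 2 ≤ n) (z : ℂ) : (base n a + C z).Monic := by
  rw [base, add_assoc]
  exact Polynomial.monic_X_pow_add (degree_lowpart (a := a) hn z)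

lemma natDegree_f (hn : 2 ≤ n) (z : ℂ) : (base n a + C z).natDegree = n := by
  rw [base, add_assoc]
  have := Polynomial.degree_add_eq_left_of_degree_lt
    (p := (X:Polynomial ℂ)^n) (q := (∑ i ∈ Finset.Icc 1 (n - 1), C ((a i : ℂ)) * X ^ (n - i)) + C z)
    (by rw [degree_X_pow]; exact degree_lowpart hn z)
  rw [natDegree_eq_of_degree_eq this, natDegree_X_pow]

end DiscProof

namespace DiscProof2
open DiscProof

variable {n : ℕ} {a : ℕ → ℤ}

noncomputable def g (n : ℕ) (a : ℕ → ℤ) : Polynomial ℂ := derivative (base n a)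

lemma deriv_f (z : ℂ) : derivative (base n a + C z) = g n a := by
  rw [derivative_add, derivative_C, add_zero]; rfl

lemma base_eq (a : ℕ → ℤ) : base n a + C (0:ℂ) = base n a := by simp

lemma coeff_base (hn : 2 ≤ n) : (base n a).coeff n = 1 := by
  have h1 := monic_f (a:=a) hn 0
  have h2 := natDegree_f (a:=a) hn 0
  rw [base_eq] at h1 h2
  have := h1.leadingCoeff
  rwa [leadingCoeff, h2] at this

lemma coeff_g (hn : 2 ≤ n) : (g n a).coeff (n-1) = n := by
  have h : n - 1 + 1 = n := by omega
  rw [g, coeff_derivative, h, coeff_base hn, one_mul]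
  have h1 : (1:ℕ) ≤ n := by omega
  push_cast [h1]
  ring

lemma natDegree_base (hn : 2 ≤ n) : (base n a).natDegree = n := by
  have h2 := natDegree_f (a:=a) hn 0
  rwa [base_eq] at h2

lemma natDegree_g (hn : 2 ≤ n) : (g n a).natDegree = n - 1 := by
  have hne : (g n a).coeff (n-1) ≠ 0 := by
    rw [coeff_g hn]; exact_mod_cast (by omega : n ≠ 0)
  have h1 : n - 1 ≤ (g n a).natDegree := le_natDegree_of_ne_zero hne
  have h2 : (g n a).natDegree ≤ n - 1 := by
    have := natDegree_derivative_le (base n a)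
    have hb : (base n a).natDegree = n := natDegree_base hn
    rw [hb] at this
    exact this
  omega

lemma leadingCoeff_g (hn : 2 ≤ n) : (g n a).leadingCoeff = n := by
  rw [leadingCoeff, natDegree_g hn, coeff_g hn]

lemma g_ne_zero (hn : 2 ≤ n) : g n a ≠ 0 := fun h => by
  have hc := coeff_g (a:=a) hn
  rw [h, coeff_zero] at hc
  exact (Nat.cast_ne_zero.2 (by omega : n ≠ 0)) hc.symm

end DiscProof2

namespace DiscProof3
open DiscProof DiscProof2

variable {n : ℕ} {a : ℕ → ℤ}

lemma card_roots_f (hn : 2 ≤ n) (z : ℂ) :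
    Multiset.card (base n a + C z).roots = n := by
  rw [splits_iff_card_roots.1 (IsAlgClosed.splits _), natDegree_f hn z]

lemma card_roots_g (hn : 2 ≤ n) :
    Multiset.card (g n a).roots = n - 1 := by
  rw [splits_iff_card_roots.1 (IsAlgClosed.splits _), natDegree_g hn]

lemma eval_f_eq_prod (hn : 2 ≤ n) (z : ℂ) (β : ℂ) :
    ((base n a + C z).roots.map (fun r => β - r)).prod = (base n a).eval β + z := by
  have hfeq : base n a + C z = ((base n a + C z).roots.map (fun r => X - C r)).prod :=
    (IsAlgClosed.splits _).eq_prod_roots_of_monic (monic_f hn z)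
  have h2 : ((base n a + C z)).eval β = (base n a).eval β + z := by simp
  conv_rhs => rw [← h2]
  conv_rhs => rw [hfeq]
  rw [eval_multiset_prod, Multiset.map_map]
  simp [Function.comp]

lemma eval_g_eq_prod (hn : 2 ≤ n) (r : ℂ) :
    (g n a).eval r = (n:ℂ) * ((g n a).roots.map (fun β => r - β)).prod := by
  have hgeq : g n a = C ((n:ℂ)) * ((g n a).roots.map (fun β => X - C β)).prod := by
    conv_lhs => rw [(IsAlgClosed.splits (g n a)).eq_prod_roots]
    rw [leadingCoeff_g hn]
  conv_lhs => rw [hgeq]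
  rw [eval_mul, eval_C, eval_multiset_prod, Multiset.map_map]
  simp [Function.comp]

lemma key_product (hn : 2 ≤ n) (z : ℂ) :
    (((base n a + C z).roots).map (fun r => (g n a).eval r)).prod
      = (n:ℂ)^n * (((g n a).roots).map (fun β => (base n a).eval β + z)).prod := by
  have step1 : (((base n a + C z).roots).map (fun r => (g n a).eval r)).prod
      = (n:ℂ)^n * (((base n a + C z).roots).map
          (fun r => ((g n a).roots.map (fun β => r - β)).prod)).prod := by
    rw [Multiset.map_congr rfl (fun r _ => eval_g_eq_prod hn r), Multiset.prod_map_mul,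
      Multiset.map_const', Multiset.prod_replicate, card_roots_f hn z]
  rw [step1]
  congr 1
  rw [Multiset.prod_map_prod_map]
  have step2 : ∀ β : ℂ, ((base n a + C z).roots.map (fun r => r - β)).prod
      = (-1:ℂ)^n * ((base n a).eval β + z) := by
    intro β
    have : ((base n a + C z).roots.map (fun r => r - β)).prod
        = ((base n a + C z).roots.map (fun r => (-1:ℂ) * (β - r))).prod := by
      congr 1; apply Multiset.map_congr rfl; intro r _; ring
    rw [this, Multiset.prod_map_mul, Multiset.map_const', Multiset.prod_replicate,
      card_roots_f hn z, eval_f_eq_prod hn z β]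
  rw [Multiset.map_congr rfl (fun β _ => step2 β), Multiset.prod_map_mul,
    Multiset.map_const', Multiset.prod_replicate, card_roots_g hn, ← pow_mul]
  have heven : Even (n * (n-1)) := by
    have := Nat.even_mul_succ_self (n-1)
    have h1 : n - 1 + 1 = n := by omega
    rw [h1] at this
    rwa [mul_comm]
  rw [heven.neg_one_pow, one_mul]

end DiscProof3

namespace DiscProof4
open DiscProof DiscProof2 DiscProof3

variable {n : ℕ} {a : ℕ → ℤ}

noncomputable def Dpoly (n : ℕ) : MvPolynomial (Fin n) ℤ :=
  ∏ i : Fin n, ∏ j ∈ Finset.univ.erase i, (MvPolynomial.X i - MvPolynomial.X j)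

lemma Dpoly_symm (n : ℕ) : (Dpoly n).IsSymmetric := by
  intro e
  rw [Dpoly]
  simp only [map_prod, map_sub, MvPolynomial.rename_X]
  rw [← Equiv.prod_comp e
    (fun i => ∏ j ∈ Finset.univ.erase i, (MvPolynomial.X i - MvPolynomial.X j))]
  apply Finset.prod_congr rfl
  intro i _
  apply Finset.prod_bij (fun j _ => e j)
  · intro j hj
    simp only [Finset.mem_erase, Finset.mem_univ, and_true] at hj ⊢
    exact fun h => hj (e.injective h)
  · intro j₁ h₁ j₂ h₂ h
    exact e.injective h
  · intro j hj
    refine ⟨e.symm j, ?_, by simp⟩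
    simp only [Finset.mem_erase, Finset.mem_univ, and_true] at hj ⊢
    intro h
    apply hj
    rw [← h]
    simp
  · intro j _
    rfl

lemma exists_Phi (n : ℕ) : ∃ Φ : MvPolynomial (Fin n) ℤ,
    MvPolynomial.aeval (fun i : Fin n => MvPolynomial.esymm (Fin n) ℤ ((i:ℕ) + 1)) Φ = Dpoly n := by
  obtain ⟨Φ, hΦ⟩ := MvPolynomial.esymmAlgHom_surjective (σ := Fin n) (R := ℤ) (n := n)
    (by simp) ⟨Dpoly n, Dpoly_symm n⟩
  refine ⟨Φ, ?_⟩
  have := MvPolynomial.esymmAlgHom_apply (σ := Fin n) (R := ℤ) Φ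
  rw [hΦ] at this
  exact this.symm

lemma exists_enum (s : Multiset ℂ) (h : Multiset.card s = n) :
    ∃ α : Fin n → ℂ, Finset.univ.val.map α = s := by
  have hl : s.toList.length = n := by rw [Multiset.length_toList, h]
  refine ⟨fun i => s.toList.get (Fin.cast hl.symm i), ?_⟩
  rw [Fin.univ_val_map]
  rw [← List.ofFn_congr hl s.toList.get, List.ofFn_get, Multiset.coe_toList]

end DiscProof4

namespace DiscProof5
open DiscProof DiscProof2 DiscProof3 DiscProof4

variable {n : ℕ} {a : ℕ → ℤ}

lemma eval_g_at_enum (hn : 2 ≤ n) (z : ℂ) (α : Fin n → ℂ)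
    (hα : Finset.univ.val.map α = (base n a + C z).roots) (i : Fin n) :
    (g n a).eval (α i) = ∏ j ∈ Finset.univ.erase i, (α i - α j) := by
  classical
  have hmem : α i ∈ (base n a + C z).roots := by
    rw [← hα]; exact Multiset.mem_map_of_mem α (Finset.mem_univ_val i)
  have hfeq : base n a + C z = ((base n a + C z).roots.map (fun r => X - C r)).prod :=
    (IsAlgClosed.splits _).eq_prod_roots_of_monic (monic_f hn z)
  have hg : g n a = derivative (base n a + C z) := (deriv_f z).symm
  rw [hg]
  conv_lhs => rw [hfeq]
  rw [eval_multiset_prod_X_sub_C_derivative hmem, ← hα,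
    ← Multiset.map_erase_of_mem α _ (Finset.mem_univ_val i), Multiset.map_map,
    ← Finset.erase_val, ← Finset.prod_eq_multiset_prod]
  rfl

lemma prod_g_eq_aeval_D (hn : 2 ≤ n) (z : ℂ) (α : Fin n → ℂ)
    (hα : Finset.univ.val.map α = (base n a + C z).roots) :
    (((base n a + C z).roots).map (fun r => (g n a).eval r)).prod
      = MvPolynomial.aeval α (Dpoly n) := by
  classical
  rw [← hα, Multiset.map_map]
  rw [Dpoly]
  simp only [map_prod, map_sub, MvPolynomial.aeval_X]
  rw [← Finset.prod_eq_multiset_prod]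
  apply Finset.prod_congr rfl
  intro i _
  exact eval_g_at_enum hn z α hα i

end DiscProof5

namespace DiscProof6
open DiscProof DiscProof2 DiscProof3 DiscProof4 DiscProof5

variable {n : ℕ} {a : ℕ → ℤ}

lemma coeff_f_mid (hn : 2 ≤ n) (z : ℂ) {k : ℕ} (h1 : 1 ≤ k) (h2 : k ≤ n - 1) :
    (base n a + C z).coeff (n - k) = (a k : ℂ) := by
  rw [base, coeff_add, coeff_add, coeff_X_pow, coeff_C, finset_sum_coeff]
  have hne : n - k ≠ n := by omega
  have hne0 : n - k ≠ 0 := by omega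
  rw [if_neg hne, if_neg hne0, zero_add, add_zero]
  rw [Finset.sum_eq_single k]
  · simp [coeff_X_pow]
  · intro i hi hik
    rw [Finset.mem_Icc] at hi
    have : n - k ≠ n - i := by omega
    simp [coeff_X_pow, this]
  · intro hk
    exact absurd (Finset.mem_Icc.2 ⟨h1, h2⟩) hk

lemma coeff_f_zero (hn : 2 ≤ n) (z : ℂ) :
    (base n a + C z).coeff 0 = z := by
  rw [base, coeff_add, coeff_add, coeff_X_pow, coeff_C, finset_sum_coeff]
  have hne : (0:ℕ) ≠ n := by omega
  rw [if_neg hne, if_pos rfl, zero_add]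
  rw [Finset.sum_eq_zero, zero_add]
  intro i hi
  rw [Finset.mem_Icc] at hi
  have : (0:ℕ) ≠ n - i := by omega
  simp [coeff_X_pow, this]

lemma esymm_roots (hn : 2 ≤ n) (z : ℂ) {k : ℕ} (h1 : 1 ≤ k) (h2 : k ≤ n) :
    ((base n a + C z).roots).esymm k = (-1:ℂ)^k * (base n a + C z).coeff (n - k) := by
  have hcard : Multiset.card (base n a + C z).roots = (base n a + C z).natDegree := by
    rw [card_roots_f hn z, natDegree_f hn z]
  have hc := Polynomial.coeff_eq_esymm_roots_of_card hcard
    (k := n - k) (by rw [natDegree_f hn z]; omega)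
  rw [natDegree_f hn z] at hc
  have hk : n - (n - k) = k := by omega
  rw [hk, (monic_f hn z).leadingCoeff, one_mul] at hc
  rw [hc, ← mul_assoc, ← pow_add]
  have : Even (k + k) := Even.add_self k
  rw [this.neg_one_pow, one_mul]

lemma aeval_esymm (z : ℂ) (α : Fin n → ℂ)
    (hα : Finset.univ.val.map α = (base n a + C z).roots) (k : ℕ) :
    MvPolynomial.aeval α (MvPolynomial.esymm (Fin n) ℤ k) = ((base n a + C z).roots).esymm k := by
  rw [MvPolynomial.aeval_esymm_eq_multiset_esymm, hα]

end DiscProof6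

namespace DiscProof7
open DiscProof DiscProof2 DiscProof3 DiscProof4 DiscProof5 DiscProof6

variable {n : ℕ} {a : ℕ → ℤ}

noncomputable def vals (n : ℕ) (a : ℕ → ℤ) : Fin n → Polynomial ℤ := fun i =>
  if (i:ℕ) + 1 = n then Polynomial.C ((-1:ℤ)^n) * Polynomial.X
  else Polynomial.C ((-1:ℤ)^((i:ℕ)+1) * a ((i:ℕ)+1))

lemma aeval_vals (hn : 2 ≤ n) (z : ℂ) (i : Fin n) :
    Polynomial.aeval z (vals n a i)
      = (-1:ℂ)^((i:ℕ)+1) * (base n a + C z).coeff (n - ((i:ℕ)+1)) := by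
  rw [vals]
  by_cases h : (i:ℕ) + 1 = n
  · rw [if_pos h, h]
    simp only [map_mul, Polynomial.aeval_X, Polynomial.aeval_C]
    rw [show n - n = 0 from by omega, coeff_f_zero hn z]
    push_cast
    ring
  · rw [if_neg h]
    have h1 : 1 ≤ (i:ℕ)+1 := by omega
    have h2 : (i:ℕ)+1 ≤ n - 1 := by have := i.isLt; omega
    rw [Polynomial.aeval_C, coeff_f_mid hn z h1 h2]
    simp only [algebraMap_int_eq, eq_intCast]
    push_cast
    ring

lemma main_eval (hn : 2 ≤ n) (Φ : MvPolynomial (Fin n) ℤ)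
    (hΦ : MvPolynomial.aeval (fun i : Fin n => MvPolynomial.esymm (Fin n) ℤ ((i:ℕ) + 1)) Φ
      = Dpoly n) (z : ℂ) :
    Polynomial.aeval z (MvPolynomial.aeval (vals n a) Φ : Polynomial ℤ)
      = (((base n a + C z).roots).map (fun r => (g n a).eval r)).prod := by
  obtain ⟨α, hα⟩ := exists_enum ((base n a + C z).roots) (card_roots_f hn z)
  rw [prod_g_eq_aeval_D hn z α hα, ← hΦ]
  have hfun : (fun i : Fin n => Polynomial.aeval z (vals n a i))
      = (fun i : Fin n => MvPolynomial.aeval α (MvPolynomial.esymm (Fin n) ℤ ((i:ℕ)+1))) := by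
    funext i
    rw [aeval_vals hn z i, aeval_esymm z α hα,
      esymm_roots hn z (by omega) (by have := i.isLt; omega)]
  rw [MvPolynomial.comp_aeval_apply, MvPolynomial.comp_aeval_apply, hfun]

noncomputable def Pint (n : ℕ) (a : ℕ → ℤ) (Φ : MvPolynomial (Fin n) ℤ) : Polynomial ℤ :=
  Polynomial.C ((-1:ℤ)^(n*(n-1)/2)) * MvPolynomial.aeval (vals n a) Φ

lemma disc_eval (hn : 2 ≤ n) (Φ : MvPolynomial (Fin n) ℤ)
    (hΦ : MvPolynomial.aeval (fun i : Fin n => MvPolynomial.esymm (Fin n) ℤ ((i:ℕ) + 1)) Φ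
      = Dpoly n) (z : ℂ) :
    Polynomial.aeval z (Pint n a Φ) = disc (base n a + C z) := by
  rw [Pint, map_mul, Polynomial.aeval_C, main_eval hn Φ hΦ z, disc, natDegree_f hn z]
  have hd : derivative (base n a + C z) = g n a := deriv_f z
  rw [hd]
  push_cast
  rfl

end DiscProof7

namespace DiscProof8
open DiscProof DiscProof2 DiscProof3 DiscProof4 DiscProof5 DiscProof6 DiscProof7

variable {n : ℕ} {a : ℕ → ℤ}

noncomputable def Q (n : ℕ) (a : ℕ → ℤ) : Polynomial ℂ :=
  C ((-1:ℂ)^(n*(n-1)/2) * (n:ℂ)^n)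
    * (((g n a).roots).map (fun β => X + C ((base n a).eval β))).prod

lemma eval_Q (hn : 2 ≤ n) (z : ℂ) : (Q n a).eval z = disc (base n a + C z) := by
  rw [disc, natDegree_f hn z]
  have hd : derivative (base n a + C z) = g n a := deriv_f z
  rw [hd]
  have : (Multiset.map (fun r => eval r (g n a)) (base n a + C z).roots).prod
      = (n:ℂ)^n * (((g n a).roots).map (fun β => (base n a).eval β + z)).prod :=
    key_product hn z
  rw [this, Q, eval_mul, eval_C, eval_multiset_prod, Multiset.map_map]
  have hmc : Multiset.map ((fun p => eval z p) ∘ fun β => X + C (eval β (base n a)))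
        ((g n a).roots)
      = Multiset.map (fun β => (base n a).eval β + z) ((g n a).roots) := by
    apply Multiset.map_congr rfl
    intro β _
    simp [add_comm]
  rw [hmc]
  ring

lemma map_P_eq_Q (hn : 2 ≤ n) (Φ : MvPolynomial (Fin n) ℤ)
    (hΦ : MvPolynomial.aeval (fun i : Fin n => MvPolynomial.esymm (Fin n) ℤ ((i:ℕ) + 1)) Φ
      = Dpoly n) :
    (Pint n a Φ).map (Int.castRingHom ℂ) = Q n a := by
  apply Polynomial.funext
  intro z
  rw [eval_map, eval_Q hn z, ← disc_eval hn Φ hΦ z, Polynomial.aeval_def]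
  rfl

lemma monic_prodQ : ((((g n a).roots).map (fun β => X + C ((base n a).eval β))).prod).Monic := by
  apply monic_multiset_prod_of_monic
  intro β _
  exact monic_X_add_C _

lemma natDegree_prodQ (hn : 2 ≤ n) :
    ((((g n a).roots).map (fun β => X + C ((base n a).eval β))).prod).natDegree = n - 1 := by
  rw [natDegree_multiset_prod_of_monic _ (fun f hf => by
    obtain ⟨β, _, rfl⟩ := Multiset.mem_map.1 hf
    exact monic_X_add_C _)]
  rw [Multiset.map_map]
  have : Multiset.map (Polynomial.natDegree ∘ fun β => X + C ((base n a).eval β)) ((g n a).roots)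
      = Multiset.map (fun _ => 1) ((g n a).roots) := by
    apply Multiset.map_congr rfl
    intro β _
    exact natDegree_X_add_C _
  rw [this, Multiset.map_const', Multiset.sum_replicate, card_roots_g hn, smul_eq_mul, mul_one]

lemma cQ_ne_zero (hn : 2 ≤ n) : ((-1:ℂ)^(n*(n-1)/2) * (n:ℂ)^n) ≠ 0 := by
  apply mul_ne_zero
  · exact pow_ne_zero _ (by norm_num)
  · exact pow_ne_zero _ (Nat.cast_ne_zero.2 (by omega))

lemma natDegree_Q (hn : 2 ≤ n) : (Q n a).natDegree = n - 1 := by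
  rw [Q, natDegree_C_mul (cQ_ne_zero hn), natDegree_prodQ hn]

lemma leadingCoeff_Q (hn : 2 ≤ n) :
    (Q n a).leadingCoeff = (-1:ℂ)^(n*(n-1)/2) * (n:ℂ)^n := by
  rw [Q, leadingCoeff_mul, leadingCoeff_C, (monic_prodQ (a:=a)).leadingCoeff, mul_one]

end DiscProof8

/-- For `n ≥ 2` and fixed integers `a 1, ..., a (n-1)`, the discriminant
`Δ(a_1, ..., a_{n-1}, t)` of `X^n + a_1 X^{n-1} + ... + a_{n-1} X + t`, viewed as a
polynomial in the single variable `t`, has degree `n - 1` and leading coefficient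
`(-1)^{n(n-1)/2} n^n`. -/
theorem disc_degree_in_last_coeff (n : ℕ) (hn : 2 ≤ n) (a : ℕ → ℤ) :
    ∃ P : Polynomial ℤ,
      (∀ t : ℤ, ((P.eval t : ℤ) : ℂ) =
        disc (X ^ n + (∑ i ∈ Finset.Icc 1 (n - 1), C ((a i : ℂ)) * X ^ (n - i))
          + C ((t : ℤ) : ℂ))) ∧
      P.natDegree = n - 1 ∧
      P.leadingCoeff = (-1 : ℤ) ^ (n * (n - 1) / 2) * (n : ℤ) ^ n := by
  classical
  obtain ⟨Φ, hΦ⟩ := DiscProof4.exists_Phi n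
  have hinj : Function.Injective (Int.castRingHom ℂ) := fun x y h => by
    have : ((x:ℤ):ℂ) = ((y:ℤ):ℂ) := h
    exact_mod_cast this
  refine ⟨DiscProof7.Pint n a Φ, ?_, ?_, ?_⟩
  · intro t
    have h := DiscProof7.disc_eval (a:=a) hn Φ hΦ ((t:ℤ):ℂ)
    have h2 : ((((DiscProof7.Pint n a Φ).eval t : ℤ)) : ℂ)
        = Polynomial.aeval ((t:ℤ):ℂ) (DiscProof7.Pint n a Φ) := by
      rw [Polynomial.aeval_def, Polynomial.eval₂_at_intCast (algebraMap ℤ ℂ) t]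
      simp
    rw [h2, h]
    rfl
  · have hmap := Polynomial.natDegree_map_eq_of_injective hinj (DiscProof7.Pint n a Φ)
    rw [DiscProof8.map_P_eq_Q hn Φ hΦ, DiscProof8.natDegree_Q hn] at hmap
    exact hmap.symm
  · have hmap := Polynomial.leadingCoeff_map_of_injective hinj (DiscProof7.Pint n a Φ)
    rw [DiscProof8.map_P_eq_Q hn Φ hΦ, DiscProof8.leadingCoeff_Q hn] at hmap
    have hmap' : (((DiscProof7.Pint n a Φ).leadingCoeff : ℤ) : ℂ)
        = (-1:ℂ)^(n*(n-1)/2) * (n:ℂ)^n := hmap.symm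
    apply Int.cast_injective (α := ℂ)
    rw [hmap']
    push_cast
    ring
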